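/- Let f : ℤ → ℂ and let n ≥ 1. Assume the Toeplitz matrices T_n(f) and T_{n+1}(f) are invertible. Then ( 1 − U⁻_n · Ũ⁻_n ) · V⁺_{n+1} = V⁺_n, where U⁻_n is the last component of T_n(f)^{−1} f⁺, Ũ⁻_n is the last component of (T_n(f)ᵀ)^{−1} f̃⁺, and V⁺_m := (T_m(f)^{−1})_{1,1}. -/

import Mathlib

open scoped BigOperators
open Matrix

/-- The `m × m` Toeplitz matrix `T_m(f)` with `(i,j)` entry `f(i-j)`. -/
noncomputable def Tmat (f : ℤ → ℂ) (m : ℕ) : Matrix (Fin m) (Fin m) ℂ :=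
  Matrix.of fun i j : Fin m => f (((i : ℕ) : ℤ) - ((j : ℕ) : ℤ))

/-- The vector `f⁺ = (f(1), …, f(m))`. -/
def fplus (f : ℤ → ℂ) (m : ℕ) : Fin m → ℂ := fun i => f (((i : ℕ) : ℤ) + 1)

/-- The vector `f̃⁺ = (f(-1), …, f(-m))`. -/
def ftplus (f : ℤ → ℂ) (m : ℕ) : Fin m → ℂ := fun i => f (-(((i : ℕ) : ℤ) + 1))

/-- Identity (3.9) of Tracy–Widom: `(1 - U⁻_n Ũ⁻_n) V⁺_{n+1} = V⁺_n`, where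
`U⁻_n` is the last component of `T_n(f)⁻¹ f⁺`, `Ũ⁻_n` is the last component of
`(T_n(f)ᵀ)⁻¹ f̃⁺`, and `V⁺_m` is the upper-left entry of `T_m(f)⁻¹`. -/
theorem toeplitz_UV1_identity (f : ℤ → ℂ) (n : ℕ) (hn : 1 ≤ n)
    (h1 : IsUnit (Tmat f n)) (h2 : IsUnit (Tmat f (n + 1))) :
    (1 - ((Tmat f n)⁻¹ *ᵥ fplus f n) ⟨n - 1, by omega⟩ *
          (((Tmat f n)ᵀ)⁻¹ *ᵥ ftplus f n) ⟨n - 1, by omega⟩) *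
        (Tmat f (n + 1))⁻¹ ⟨0, by omega⟩ ⟨0, by omega⟩ =
      (Tmat f n)⁻¹ ⟨0, by omega⟩ ⟨0, by omega⟩ := by
  set B := Tmat f n with hBdef
  set A := Tmat f (n + 1) with hAdef
  have hBd : IsUnit B.det := (Matrix.isUnit_iff_isUnit_det B).mp h1
  have hAd : IsUnit A.det := (Matrix.isUnit_iff_isUnit_det A).mp h2
  have hBinv' : B⁻¹ * B = 1 := Matrix.nonsing_inv_mul B hBd
  have hBtinv : Bᵀ * (Bᵀ)⁻¹ = 1 := by
    apply Matrix.mul_nonsing_inv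
    rwa [Matrix.det_transpose]
  have hAinv : A * A⁻¹ = 1 := Matrix.mul_nonsing_inv A hAd
  -- notation
  set w : Fin (n + 1) → ℂ := fun i => A⁻¹ i ⟨0, by omega⟩ with hw
  set c : Fin n → ℂ := fun i => f (((i : ℕ) : ℤ) - (n : ℤ)) with hc
  set U : ℂ := (B⁻¹ *ᵥ fplus f n) ⟨n - 1, by omega⟩ with hU
  set Ut : ℂ := ((Bᵀ)⁻¹ *ᵥ ftplus f n) ⟨n - 1, by omega⟩ with hUt
  set w0 : ℂ := w ⟨0, by omega⟩ with hw0
  set wl : ℂ := w (Fin.last n) with hwl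
  -- the first column of A⁻¹ satisfies A *ᵥ w = e₀
  have hAw : ∀ i : Fin (n + 1),
      (∑ j : Fin (n + 1), A i j * w j) = if i = ⟨0, by omega⟩ then 1 else 0 := by
    intro i
    have := congrFun (congrFun hAinv i) ⟨0, by omega⟩
    simpa [Matrix.mul_apply, Matrix.one_apply, hw] using this
  -- Eq2 : rows 1..n give B *ᵥ (tail of w) = -(w 0) • fplus
  have Eq2 : (B *ᵥ fun j : Fin n => w j.succ) = fun i => -w0 * fplus f n i := by
    funext i
    have h := hAw i.succ
    rw [Fin.sum_univ_succ] at h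
    have hne : (i.succ : Fin (n + 1)) ≠ ⟨0, by omega⟩ := by
      simp [Fin.ext_iff]
    rw [if_neg hne] at h
    have h0 : A i.succ 0 = fplus f n i := by
      simp [hAdef, Tmat, fplus]
    have hBij : ∀ j : Fin n, A i.succ j.succ = B i j := by
      intro j
      simp [hAdef, hBdef, Tmat]
    have hsum : (∑ j : Fin n, A i.succ j.succ * w j.succ)
        = (B *ᵥ fun j : Fin n => w j.succ) i := by
      simp only [Matrix.mulVec, dotProduct]
      exact Finset.sum_congr rfl fun j _ => by rw [hBij j]
    rw [h0, hsum] at h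
    have h00 : (0 : Fin (n + 1)) = ⟨0, by omega⟩ := rfl
    rw [h00] at h
    linear_combination h
  -- hence the tail of w is -(w 0) • (B⁻¹ *ᵥ fplus), giving wl = -(w0) * U
  have htail : (fun j : Fin n => w j.succ) = fun j => -w0 * (B⁻¹ *ᵥ fplus f n) j := by
    have h1' : (fun j : Fin n => w j.succ)
        = B⁻¹ *ᵥ (B *ᵥ fun j : Fin n => w j.succ) := by
      rw [Matrix.mulVec_mulVec, hBinv', Matrix.one_mulVec]
    rw [h1', Eq2]
    have : (fun i : Fin n => -w0 * fplus f n i) = (-w0) • fplus f n := by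
      funext i; simp [Pi.smul_apply, smul_eq_mul]
    rw [this, Matrix.mulVec_smul]
    funext j; simp [Pi.smul_apply, smul_eq_mul]
  have hwlU : wl = -w0 * U := by
    have := congrFun htail ⟨n - 1, by omega⟩
    have hlast : (⟨n - 1, by omega⟩ : Fin n).succ = Fin.last n := by
      simp [Fin.ext_iff]; omega
    rw [hlast] at this
    rw [hwl, this, hU]
  -- Eq1 : rows 0..n-1 give B *ᵥ (init of w) = e₀ - wl • c
  have Eq1 : (B *ᵥ fun j : Fin n => w j.castSucc)
      = fun i : Fin n => (if i = ⟨0, by omega⟩ then 1 else 0) - wl * c i := by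
    funext i
    have h := hAw i.castSucc
    rw [Fin.sum_univ_castSucc] at h
    have hif : (i.castSucc = (⟨0, by omega⟩ : Fin (n + 1))) ↔ i = ⟨0, by omega⟩ := by
      simp [Fin.ext_iff]
    have hlastcol : A i.castSucc (Fin.last n) = c i := by
      simp [hAdef, Tmat, hc]
    have hBij : ∀ j : Fin n, A i.castSucc j.castSucc = B i j := by
      intro j
      simp [hAdef, hBdef, Tmat]
    have hsum : (∑ j : Fin n, A i.castSucc j.castSucc * w j.castSucc)
        = (B *ᵥ fun j : Fin n => w j.castSucc) i := by
      simp only [Matrix.mulVec, dotProduct]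
      exact Finset.sum_congr rfl fun j _ => by rw [hBij j]
    rw [hsum, hlastcol] at h
    by_cases h0 : i = ⟨0, by omega⟩
    · rw [if_pos h0]
      rw [if_pos (hif.mpr h0)] at h
      rw [hwl]
      linear_combination h
    · rw [if_neg h0]
      rw [if_neg (fun hh => h0 (hif.mp hh))] at h
      rw [hwl]
      linear_combination h
  -- hence w0 = V - wl * (B⁻¹ *ᵥ c) 0
  have hinit : (fun j : Fin n => w j.castSucc)
      = fun j => B⁻¹ j ⟨0, by omega⟩ - wl * (B⁻¹ *ᵥ c) j := by
    have h1' : (fun j : Fin n => w j.castSucc)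
        = B⁻¹ *ᵥ (B *ᵥ fun j : Fin n => w j.castSucc) := by
      rw [Matrix.mulVec_mulVec, hBinv', Matrix.one_mulVec]
    rw [h1', Eq1]
    funext j
    simp only [Matrix.mulVec, dotProduct]
    rw [show (∑ k : Fin n, B⁻¹ j k * ((if k = ⟨0, by omega⟩ then (1:ℂ) else 0) - wl * c k))
        = (∑ k : Fin n, B⁻¹ j k * (if k = ⟨0, by omega⟩ then (1:ℂ) else 0))
          - wl * ∑ k : Fin n, B⁻¹ j k * c k by
      rw [Finset.mul_sum, ← Finset.sum_sub_distrib]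
      exact Finset.sum_congr rfl fun k _ => by ring]
    congr 1
    simp [mul_ite]
  -- persymmetry : (B⁻¹ *ᵥ c) 0 = Ut
  have hpersym : (B⁻¹ *ᵥ c) ⟨0, by omega⟩ = Ut := by
    set y : Fin n → ℂ := (Bᵀ)⁻¹ *ᵥ ftplus f n with hy
    have hBty : Bᵀ *ᵥ y = ftplus f n := by
      rw [hy, Matrix.mulVec_mulVec, hBtinv, Matrix.one_mulVec]
    set x : Fin n → ℂ := fun i => y i.rev with hx
    have hBx : B *ᵥ x = c := by
      funext i
      have h2' := congrFun hBty i.rev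
      simp only [Matrix.mulVec, dotProduct] at h2' ⊢
      have hre : (∑ j : Fin n, B i j * x j) = ∑ k : Fin n, B i k.rev * x k.rev := by
        exact (Fintype.sum_bijective Fin.rev Fin.rev_bijective _ _ (fun k => rfl)).symm
      rw [hre]
      have : (∑ k : Fin n, B i k.rev * x k.rev) = ∑ k : Fin n, Bᵀ i.rev k * y k := by
        apply Finset.sum_congr rfl
        intro k _
        have h1'' : B i k.rev = Bᵀ i.rev k := by
          simp only [hBdef, Tmat, Matrix.transpose_apply, Matrix.of_apply]
          congr 1
          have hkv : ((k.rev : ℕ) : ℤ) = (n : ℤ) - 1 - (k : ℕ) := by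
            have h' := Fin.val_rev k
            have hk := k.isLt
            omega
          have hiv : ((i.rev : ℕ) : ℤ) = (n : ℤ) - 1 - (i : ℕ) := by
            have h' := Fin.val_rev i
            have hi := i.isLt
            omega
          rw [hkv, hiv]; ring
        rw [h1'']
        congr 1
        simp [hx, Fin.rev_rev]
      rw [this, h2']
      simp only [ftplus, hc]
      congr 1
      have : ((i.rev : ℕ) : ℤ) = (n : ℤ) - 1 - (i : ℕ) := by
        have h' := Fin.val_rev i
        have hi := i.isLt
        omega
      rw [this]; ring
    have hxeq : x = B⁻¹ *ᵥ c := by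
      rw [← hBx, Matrix.mulVec_mulVec, hBinv', Matrix.one_mulVec]
    rw [← hxeq]
    have : ((⟨0, by omega⟩ : Fin n)).rev = ⟨n - 1, by omega⟩ := by
      simp [Fin.ext_iff, Fin.rev]
    rw [hx]
    simp only []
    rw [this, hUt, hy]
  -- put everything together
  have hkey := congrFun hinit ⟨0, by omega⟩
  have hcast0 : ((⟨0, by omega⟩ : Fin n)).castSucc = (⟨0, by omega⟩ : Fin (n + 1)) := by
    simp [Fin.ext_iff]
  rw [hcast0, hpersym] at hkey
  -- hkey : w0 = B⁻¹ 0 0 - wl * Ut ; hwlU : wl = -w0 * U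
  -- goal : (1 - U * Ut) * w0 = B⁻¹ 0 0
  show (1 - U * Ut) * w0 = B⁻¹ ⟨0, by omega⟩ ⟨0, by omega⟩
  rw [hwlU] at hkey
  linear_combination hkey
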